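/- In the example self-similar groupoid action (G,E) generated by the partial isomorphisms a, b, c, the isotropy group G_u^u = {g ∈ G : d(g) = t(g) = u} is infinite cyclic, generated by a⁻¹cba; in particular, (a⁻¹cba)^n ≠ id_u for every nonzero integer n, so G_u^u is isomorphic to ℤ. -/

import Mathlib

attribute [local instance] Classical.propDecidable

/-- A directed graph `E = (E⁰, E¹, r, s)`. -/
structure DGraph where
  V : Type
  Edge : Type
  r : Edge → V
  s : Edge → V

/-- `E.chain v l w` says that the list of edges `l` forms a path with range `v`
and source `w`: consecutive edges satisfy `r e_{i+1} = s e_i`. -/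
def DGraph.chain (E : DGraph) : E.V → List E.Edge → E.V → Prop
  | v, [], w => v = w
  | v, e :: l, w => E.r e = v ∧ E.chain (E.s e) l w

theorem DGraph.chain_append (E : DGraph) :
    ∀ (l₁ : List E.Edge) (v w x : E.V) (l₂ : List E.Edge),
      E.chain v l₁ w → E.chain w l₂ x → E.chain v (l₁ ++ l₂) x := by
  intro l₁
  induction l₁ with
  | nil =>
      intro v w x l₂ h1 h2
      have hvw : v = w := h1
      rw [List.nil_append]
      exact hvw ▸ h2
  | cons e l ih =>
      intro v w x l₂ h1 h2
      have h1' : E.r e = v ∧ E.chain (E.s e) l w := h1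
      exact ⟨h1'.1, ih _ _ _ _ h1'.2 h2⟩

/-- A finite path in the graph `E`: a range vertex `r μ`, a compatible list of
edges, and a source vertex `s μ`.  Vertices are the paths with no edges. -/
structure Pth (E : DGraph) where
  rng : E.V
  edges : List E.Edge
  src : E.V
  ok : E.chain rng edges src

/-- The length-zero path at a vertex `v`. -/
def Pth.ofVertex {E : DGraph} (v : E.V) : Pth E := ⟨v, [], v, rfl⟩

/-- The length-one path given by an edge `e`. -/
def Pth.ofEdge {E : DGraph} (e : E.Edge) : Pth E :=
  ⟨E.r e, [e], E.s e, ⟨rfl, rfl⟩⟩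

/-- Concatenation `μ ν` of paths (meaningful when `r ν = s μ`; junk otherwise). -/
noncomputable def Pth.concat {E : DGraph} (μ ν : Pth E) : Pth E :=
  if h : ν.rng = μ.src then
    ⟨μ.rng, μ.edges ++ ν.edges, ν.src,
      E.chain_append μ.edges μ.rng μ.src ν.src ν.edges μ.ok (h ▸ ν.ok)⟩
  else μ

/-- A (discrete) groupoid with unit space `V`: `d` and `t` are the domain and
terminus maps, `unit v = id_v`, and a pair `(g, h)` is composable when `d g = t h`. -/
structure VGroupoid (V : Type) (α : Type*) where
  d : α → V
  t : α → V
  mul : α → α → α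
  inv : α → α
  unit : V → α
  d_unit : ∀ v, d (unit v) = v
  t_unit : ∀ v, t (unit v) = v
  d_inv : ∀ g, d (inv g) = t g
  t_inv : ∀ g, t (inv g) = d g
  d_mul : ∀ g h, d g = t h → d (mul g h) = d h
  t_mul : ∀ g h, d g = t h → t (mul g h) = t g
  mul_assoc : ∀ g h k, d g = t h → d h = t k → mul (mul g h) k = mul g (mul h k)
  unit_mul : ∀ g, mul (unit (t g)) g = g
  mul_unit : ∀ g, mul g (unit (d g)) = g
  inv_mul : ∀ g, mul (inv g) g = unit (d g)
  mul_inv : ∀ g, mul g (inv g) = unit (t g)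
  inv_inv : ∀ g, inv (inv g) = g

/-- A self-similar groupoid action `(G, E)` on the path space of the graph `E`:
a groupoid `G` with unit space `E⁰` together with a faithful action by partial
isomorphisms of the forest `T_E` — each `g ∈ G` maps `d(g) E*` bijectively onto
`t(g) E*` preserving path length, sending vertices to vertices and preserving the
edge relation of `T_E` — such that for every `g ∈ G` and every edge
`e ∈ d(g) E¹` there is a unique restriction `g|_e ∈ G` with
`g · (e μ) = (g · e)(g|_e · μ)` for all `μ ∈ s(e) E*`. -/
structure SelfSimilar (E : DGraph) (α : Type*) extends VGroupoid E.V α where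
  act : α → Pth E → Pth E
  act_rng : ∀ g μ, μ.rng = d g → (act g μ).rng = t g
  act_len : ∀ g μ, μ.rng = d g → (act g μ).edges.length = μ.edges.length
  act_vertex : ∀ g, act g (Pth.ofVertex (d g)) = Pth.ofVertex (t g)
  act_mul : ∀ g h μ, d g = t h → μ.rng = d h → act (mul g h) μ = act g (act h μ)
  act_unit : ∀ v μ, μ.rng = v → act (unit v) μ = μ
  act_surj : ∀ g ν, ν.rng = t g → ∃ μ, μ.rng = d g ∧ act g μ = ν
  act_edge : ∀ g μ e, μ.rng = d g → E.r e = μ.src →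
      ∃ e' : E.Edge, act g (μ.concat (Pth.ofEdge e)) = (act g μ).concat (Pth.ofEdge e')
  faithful : ∀ g₁ g₂, d g₁ = d g₂ → (∀ μ, μ.rng = d g₁ → act g₁ μ = act g₂ μ) → g₁ = g₂
  res : α → E.Edge → α
  res_d : ∀ g e, E.r e = d g → d (res g e) = E.s e
  res_spec : ∀ g e μ, E.r e = d g → μ.rng = E.s e →
      act g ((Pth.ofEdge e).concat μ) = (act g (Pth.ofEdge e)).concat (act (res g e) μ)
  res_unique : ∀ g e k, E.r e = d g → d k = E.s e →
      (∀ μ, μ.rng = E.s e →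
        act g ((Pth.ofEdge e).concat μ) = (act g (Pth.ofEdge e)).concat (act k μ)) →
      k = res g e

/-- The example graph: vertices `u = 0`, `v = 1`, `w = 2` and edges
`e₁ = 0, …, e₆ = 5` with `r e₁ = s e₁ = u`; `r e₂ = v`, `s e₂ = u`; `r e₃ = u`,
`s e₃ = v`; `r e₄ = r e₅ = w`, `s e₄ = s e₅ = v`; `r e₆ = v`, `s e₆ = w`. -/
abbrev exGraph : DGraph where
  V := Fin 3
  Edge := Fin 6
  r := ![0, 1, 0, 2, 2, 1]
  s := ![0, 0, 1, 1, 1, 2]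


section AuxSSG

/-! ### Auxiliary path lemmas -/

theorem Pth.ext' {E : DGraph} {μ ν : Pth E} (h1 : μ.rng = ν.rng)
    (h2 : μ.edges = ν.edges) (h3 : μ.src = ν.src) : μ = ν := by
  cases μ; cases ν; cases h1; cases h2; cases h3; rfl

theorem concat_eq {E : DGraph} (μ ν : Pth E) (h : ν.rng = μ.src) :
    μ.concat ν = ⟨μ.rng, μ.edges ++ ν.edges, ν.src,
      E.chain_append μ.edges μ.rng μ.src ν.src ν.edges μ.ok (h ▸ ν.ok)⟩ :=
  dif_pos h

theorem concat_rng {E : DGraph} {μ ν : Pth E} (h : ν.rng = μ.src) :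
    (μ.concat ν).rng = μ.rng := by rw [concat_eq μ ν h]

theorem concat_ofVertex {E : DGraph} (μ : Pth E) :
    μ.concat (Pth.ofVertex μ.src) = μ := by
  rw [concat_eq μ _ rfl]
  exact Pth.ext' rfl (List.append_nil _) rfl

theorem ofEdge_concat_inj {E : DGraph} (e : E.Edge) {μ ν : Pth E}
    (hμ : μ.rng = E.s e) (hν : ν.rng = E.s e)
    (h : (Pth.ofEdge e).concat μ = (Pth.ofEdge e).concat ν) : μ = ν := by
  rw [concat_eq _ _ hμ, concat_eq _ _ hν] at h
  have h2 := congrArg Pth.edges h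
  have h3 := congrArg Pth.src h
  exact Pth.ext' (hμ.trans hν.symm) (List.append_cancel_left h2) h3

/-! ### Groupoid lemmas -/

namespace VGroupoid

variable {V : Type} {α : Type*} (S : VGroupoid V α)

theorem inv_unit (v : V) : S.inv (S.unit v) = S.unit v := by
  have h1 : S.mul (S.inv (S.unit v)) (S.unit v) = S.unit v := by
    rw [S.inv_mul, S.d_unit]
  have h2 : S.mul (S.inv (S.unit v)) (S.unit v) = S.inv (S.unit v) := by
    have h := S.mul_unit (S.inv (S.unit v))
    rwa [S.d_inv, S.t_unit] at h
  rw [← h2, h1]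

theorem inv_mul_cancel_left {g k : α} (h : S.d g = S.t k) :
    S.mul (S.inv g) (S.mul g k) = k := by
  rw [← S.mul_assoc (S.inv g) g k (S.d_inv g) h, S.inv_mul, h, S.unit_mul]

theorem mul_inv_cancel_left {g k : α} (h : S.t g = S.t k) :
    S.mul g (S.mul (S.inv g) k) = k := by
  rw [← S.mul_assoc g (S.inv g) k (S.t_inv g).symm ((S.d_inv g).trans h),
    S.mul_inv, h, S.unit_mul]

theorem mul_inv_rev {g h : α} (hc : S.d g = S.t h) :
    S.inv (S.mul g h) = S.mul (S.inv h) (S.inv g) := by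
  have hk : S.t (S.mul (S.inv h) (S.inv g)) = S.d h := by
    rw [S.t_mul _ _ (by rw [S.d_inv, S.t_inv]; exact hc.symm), S.t_inv]
  have h1 : S.d (S.mul g h) = S.d h := S.d_mul g h hc
  have h2 : S.t (S.mul g h) = S.t g := S.t_mul g h hc
  have hA : S.mul (S.mul g h) (S.mul (S.inv h) (S.inv g)) = S.unit (S.t g) := by
    rw [S.mul_assoc g h _ hc hk.symm]
    rw [S.mul_inv_cancel_left (g := h) (k := S.inv g) (by rw [S.t_inv]; exact hc.symm)]
    exact S.mul_inv g
  have h3 : S.mul (S.inv (S.mul g h)) (S.unit (S.t g)) = S.inv (S.mul g h) := by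
    have h4 := S.mul_unit (S.inv (S.mul g h))
    rwa [S.d_inv, h2] at h4
  rw [← h3, ← hA, ← S.mul_assoc _ _ _ (by rw [S.d_inv]) (h1.trans hk.symm),
    S.inv_mul, h1, ← hk, S.unit_mul]

end VGroupoid

/-! ### The isotropy group at the vertex `u = 0` -/

def G0 {α : Type*} (S : SelfSimilar exGraph α) : Type _ :=
  {g : α // S.d g = 0 ∧ S.t g = 0}

instance instGroupG0 {α : Type*} (S : SelfSimilar exGraph α) : Group (G0 S) where
  mul g h := ⟨S.mul g.1 h.1, by
    constructor
    · rw [S.d_mul g.1 h.1 (g.2.1.trans h.2.2.symm)]; exact h.2.1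
    · rw [S.t_mul g.1 h.1 (g.2.1.trans h.2.2.symm)]; exact g.2.2⟩
  one := ⟨S.unit 0, S.d_unit 0, S.t_unit 0⟩
  inv g := ⟨S.inv g.1, by rw [S.d_inv]; exact g.2.2, by rw [S.t_inv]; exact g.2.1⟩
  mul_assoc g h k := Subtype.ext
    (S.mul_assoc g.1 h.1 k.1 (g.2.1.trans h.2.2.symm) (h.2.1.trans k.2.2.symm))
  one_mul g := Subtype.ext (by
    have h := S.unit_mul g.1
    rwa [g.2.2] at h)
  mul_one g := Subtype.ext (by
    have h := S.mul_unit g.1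
    rwa [g.2.1] at h)
  inv_mul_cancel g := Subtype.ext (by
    show S.mul (S.inv g.1) g.1 = S.unit 0
    rw [S.inv_mul, g.2.1])

theorem G0.mul_val {α : Type*} {S : SelfSimilar exGraph α} (g h : G0 S) :
    (g * h).1 = S.mul g.1 h.1 := rfl

theorem G0.inv_val {α : Type*} {S : SelfSimilar exGraph α} (g : G0 S) :
    (g⁻¹).1 = S.inv g.1 := rfl

theorem G0.one_val {α : Type*} (S : SelfSimilar exGraph α) :
    (1 : G0 S).1 = S.unit 0 := rfl

/-! ### Action lemmas -/

theorem act_inv_act {α : Type*} (S : SelfSimilar exGraph α) (g : α) (μ : Pth exGraph)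
    (h : μ.rng = S.d g) : S.act (S.inv g) (S.act g μ) = μ := by
  rw [← S.act_mul (S.inv g) g μ (S.d_inv g) h, S.inv_mul, S.act_unit _ _ h]

theorem act_act_inv {α : Type*} (S : SelfSimilar exGraph α) (g : α) (ν : Pth exGraph)
    (h : ν.rng = S.t g) : S.act g (S.act (S.inv g) ν) = ν := by
  have h2 := act_inv_act S (S.inv g) ν (h.trans (S.d_inv g).symm)
  rwa [S.inv_inv] at h2

theorem act_inj {α : Type*} (S : SelfSimilar exGraph α) (g : α) {μ ν : Pth exGraph}
    (hμ : μ.rng = S.d g) (hν : ν.rng = S.d g)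
    (h : S.act g μ = S.act g ν) : μ = ν := by
  rw [← act_inv_act S g μ hμ, h, act_inv_act S g ν hν]

theorem path1 (ν : Pth exGraph) (h0 : ν.rng = 0) (h1 : ν.edges.length = 1) :
    ν = Pth.ofEdge (E := exGraph) 0 ∨ ν = Pth.ofEdge (E := exGraph) 2 := by
  obtain ⟨r, l, s, ok⟩ := ν
  simp only at h0 h1
  subst h0
  match l, h1, ok with
  | [e], _, ok =>
    have he : e = 0 ∨ e = 2 := by
      have hall : ∀ e : Fin 6, exGraph.r e = 0 → e = 0 ∨ e = 2 := by decide
      exact hall e ok.1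
    have hsrc : exGraph.s e = s := ok.2
    rcases he with rfl | rfl
    · exact Or.inl (Pth.ext' ok.1 rfl hsrc.symm)
    · exact Or.inr (Pth.ext' ok.1 rfl hsrc.symm)

theorem pthne : Pth.ofEdge (E := exGraph) 0 ≠ Pth.ofEdge (E := exGraph) 2 := by
  intro h
  exact absurd (congrArg Pth.edges h) (by decide)

theorem acts01 {α : Type*} (S : SelfSimilar exGraph α) (g : G0 S) :
    (S.act g.1 (Pth.ofEdge (E := exGraph) 0) = Pth.ofEdge (E := exGraph) 0 ∧ S.act g.1 (Pth.ofEdge (E := exGraph) 2) = Pth.ofEdge (E := exGraph) 2)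
    ∨ (S.act g.1 (Pth.ofEdge (E := exGraph) 0) = Pth.ofEdge (E := exGraph) 2 ∧ S.act g.1 (Pth.ofEdge (E := exGraph) 2) = Pth.ofEdge (E := exGraph) 0) := by
  have hr1 : (Pth.ofEdge (E := exGraph) 0).rng = S.d g.1 :=
    (show (Pth.ofEdge (E := exGraph) 0).rng = (0 : Fin 3) from rfl).trans g.2.1.symm
  have hr3 : (Pth.ofEdge (E := exGraph) 2).rng = S.d g.1 :=
    (show (Pth.ofEdge (E := exGraph) 2).rng = (0 : Fin 3) from rfl).trans g.2.1.symm
  have d1 := path1 (S.act g.1 (Pth.ofEdge 0)) ((S.act_rng g.1 _ hr1).trans g.2.2)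
    ((S.act_len g.1 _ hr1).trans rfl)
  have d3 := path1 (S.act g.1 (Pth.ofEdge 2)) ((S.act_rng g.1 _ hr3).trans g.2.2)
    ((S.act_len g.1 _ hr3).trans rfl)
  rcases d1 with h1 | h1 <;> rcases d3 with h3 | h3
  · exact absurd (act_inj S g.1 hr1 hr3 (h1.trans h3.symm)) pthne
  · exact Or.inl ⟨h1, h3⟩
  · exact Or.inr ⟨h1, h3⟩
  · exact absurd (act_inj S g.1 hr1 hr3 (h1.trans h3.symm)) pthne

/-! ### Parity homomorphism -/

noncomputable def epsFun {α : Type*} (S : SelfSimilar exGraph α) (g : G0 S) :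
    Multiplicative (ZMod 2) :=
  if S.act g.1 (Pth.ofEdge (E := exGraph) 0) = Pth.ofEdge (E := exGraph) 0 then 1
  else Multiplicative.ofAdd 1

theorem epsFun_fix {α : Type*} (S : SelfSimilar exGraph α) (g : G0 S)
    (h : S.act g.1 (Pth.ofEdge (E := exGraph) 0) = Pth.ofEdge (E := exGraph) 0) :
    epsFun S g = 1 := if_pos h

theorem epsFun_swap {α : Type*} (S : SelfSimilar exGraph α) (g : G0 S)
    (h : S.act g.1 (Pth.ofEdge (E := exGraph) 0) = Pth.ofEdge (E := exGraph) 2) :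
    epsFun S g = Multiplicative.ofAdd 1 :=
  if_neg (fun hc => pthne (hc.symm.trans h))

noncomputable def eps {α : Type*} (S : SelfSimilar exGraph α) :
    G0 S →* Multiplicative (ZMod 2) where
  toFun := epsFun S
  map_one' := epsFun_fix S 1 (S.act_unit 0 _ rfl)
  map_mul' g h := by
    have hr1h : (Pth.ofEdge (E := exGraph) 0).rng = S.d h.1 :=
      (show (Pth.ofEdge (E := exGraph) 0).rng = (0 : Fin 3) from rfl).trans h.2.1.symm
    have hact : S.act (g * h).1 (Pth.ofEdge (E := exGraph) 0)
        = S.act g.1 (S.act h.1 (Pth.ofEdge (E := exGraph) 0)) := by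
      rw [G0.mul_val]
      exact S.act_mul g.1 h.1 _ (g.2.1.trans h.2.2.symm) hr1h
    show epsFun S (g * h) = epsFun S g * epsFun S h
    rcases acts01 S h with ⟨h1, h3⟩ | ⟨h1, h3⟩ <;> rcases acts01 S g with ⟨g1, g3⟩ | ⟨g1, g3⟩
    · rw [epsFun_fix S (g*h) (by rw [hact, h1, g1]), epsFun_fix S g g1,
        epsFun_fix S h h1, one_mul]
    · rw [epsFun_swap S (g*h) (by rw [hact, h1, g1]), epsFun_swap S g g1,
        epsFun_fix S h h1, mul_one]
    · rw [epsFun_swap S (g*h) (by rw [hact, h1, g3]), epsFun_fix S g g1,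
        epsFun_swap S h h1, one_mul]
    · rw [epsFun_fix S (g*h) (by rw [hact, h1, g3]), epsFun_swap S g g1,
        epsFun_swap S h h1]
      decide

theorem eps_apply {α : Type*} (S : SelfSimilar exGraph α) (g : G0 S) :
    eps S g = epsFun S g := rfl

/-! ### The doubling relation -/

def Q {α : Type*} (S : SelfSimilar exGraph α) (g h : G0 S) : Prop :=
  ∀ μ : Pth exGraph, μ.rng = 0 →
    S.act g.1 ((Pth.ofEdge (E := exGraph) 0).concat μ)
      = (Pth.ofEdge (E := exGraph) 0).concat (S.act h.1 μ)

theorem concat0_rng {μ : Pth exGraph} (hμ : μ.rng = 0) :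
    ((Pth.ofEdge (E := exGraph) 0).concat μ).rng = 0 :=
  (concat_rng (hμ.trans rfl)).trans rfl

theorem Qone {α : Type*} (S : SelfSimilar exGraph α) : Q S 1 1 := by
  intro μ hμ
  rw [G0.one_val, S.act_unit 0 μ hμ, S.act_unit 0 _ (concat0_rng hμ)]

theorem Qmul {α : Type*} (S : SelfSimilar exGraph α) {g g' h h' : G0 S}
    (H : Q S g h) (H' : Q S g' h') : Q S (g * g') (h * h') := by
  intro μ hμ
  rw [G0.mul_val, G0.mul_val]
  rw [S.act_mul g.1 g'.1 _ (g.2.1.trans g'.2.2.symm) ((concat0_rng hμ).trans g'.2.1.symm)]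
  rw [H' μ hμ]
  have hr' : (S.act h'.1 μ).rng = 0 := (S.act_rng h'.1 μ (hμ.trans h'.2.1.symm)).trans h'.2.2
  rw [H _ hr']
  rw [S.act_mul h.1 h'.1 μ (h.2.1.trans h'.2.2.symm) (hμ.trans h'.2.1.symm)]

theorem Qinv {α : Type*} (S : SelfSimilar exGraph α) {g h : G0 S}
    (H : Q S g h) : Q S g⁻¹ h⁻¹ := by
  intro ν hν
  rw [G0.inv_val, G0.inv_val]
  have hr : (S.act (S.inv h.1) ν).rng = 0 := by
    rw [S.act_rng _ _ (hν.trans ((S.d_inv h.1).trans h.2.2).symm), S.t_inv, h.2.1]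
  have H1 := H (S.act (S.inv h.1) ν) hr
  rw [act_act_inv S h.1 ν (hν.trans h.2.2.symm)] at H1
  rw [← H1]
  rw [act_inv_act S g.1 _ ((concat0_rng hr).trans g.2.1.symm)]

theorem Qpow {α : Type*} (S : SelfSimilar exGraph α) (D g : G0 S) (hQ : Q S D g) :
    ∀ n : ℤ, Q S (D ^ n) (g ^ n) := by
  intro n
  induction n using Int.induction_on with
  | zero => rw [zpow_zero, zpow_zero]; exact Qone S
  | succ k ih => rw [zpow_add_one, zpow_add_one]; exact Qmul S ih hQ
  | pred k ih => rw [zpow_sub_one, zpow_sub_one]; exact Qmul S ih (Qinv S hQ)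

end AuxSSG

/-- In the example self-similar groupoid action `(G, E)` generated
by the partial isomorphisms `a, b, c` (generation is expressed by the induction
principle `hgen`), the isotropy group `G_u^u = {g ∈ G : d g = t g = u}` is infinite
cyclic, generated by `a⁻¹cba`: there is a map `f : ℤ → G` with `f 1 = a⁻¹cba`,
`f 0 = id_u`, `f (m + n) = f m · f n`, taking values in `G_u^u`, which is injective
(in particular `(a⁻¹cba)^n ≠ id_u` for every `n ≠ 0`) and surjective onto `G_u^u`;
so `G_u^u ≅ ℤ`. -/
theorem example_isotropy_group_is_Z {α : Type*}
    (S : SelfSimilar exGraph α) (a b c : α)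
    (hda : S.d a = 0) (hta : S.t a = 1) (hdb : S.d b = 1) (htb : S.t b = 2)
    (hdc : S.d c = 2) (htc : S.t c = 1)
    (ha1 : ∀ μ : Pth exGraph, μ.rng = 0 →
        S.act a ((Pth.ofEdge (E := exGraph) 0).concat μ) =
          (Pth.ofEdge (E := exGraph) 1).concat μ)
    (ha3 : ∀ μ : Pth exGraph, μ.rng = 1 →
        S.act a ((Pth.ofEdge (E := exGraph) 2).concat μ) =
          (Pth.ofEdge (E := exGraph) 5).concat (S.act b μ))
    (hb2 : ∀ μ : Pth exGraph, μ.rng = 0 →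
        S.act b ((Pth.ofEdge (E := exGraph) 1).concat μ) =
          (Pth.ofEdge (E := exGraph) 4).concat (S.act a μ))
    (hb6 : ∀ μ : Pth exGraph, μ.rng = 2 →
        S.act b ((Pth.ofEdge (E := exGraph) 5).concat μ) =
          (Pth.ofEdge (E := exGraph) 3).concat (S.act c μ))
    (hc4 : ∀ μ : Pth exGraph, μ.rng = 1 →
        S.act c ((Pth.ofEdge (E := exGraph) 3).concat μ) =
          (Pth.ofEdge (E := exGraph) 1).concat (S.act (S.inv a) μ))
    (hc5 : ∀ μ : Pth exGraph, μ.rng = 1 →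
        S.act c ((Pth.ofEdge (E := exGraph) 4).concat μ) =
          (Pth.ofEdge (E := exGraph) 5).concat (S.act b μ))
    (hra1 : S.res a 0 = S.unit 0) (hra3 : S.res a 2 = b)
    (hrb2 : S.res b 1 = a) (hrb6 : S.res b 5 = c)
    (hrc4 : S.res c 3 = S.inv a) (hrc5 : S.res c 4 = b)
    (hgen : ∀ P : α → Prop, P a → P b → P c → (∀ v : Fin 3, P (S.unit v)) →
        (∀ x, P x → P (S.inv x)) →
        (∀ x y, P x → P y → S.d x = S.t y → P (S.mul x y)) → ∀ x, P x) :
    ∃ f : ℤ → α,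
      f 1 = S.mul (S.inv a) (S.mul c (S.mul b a)) ∧
      f 0 = S.unit 0 ∧
      (∀ m n : ℤ, f (m + n) = S.mul (f m) (f n)) ∧
      (∀ n : ℤ, S.d (f n) = 0 ∧ S.t (f n) = 0) ∧
      Function.Injective f ∧
      (∀ n : ℤ, n ≠ 0 → f n ≠ S.unit 0) ∧
      (∀ g : α, S.d g = 0 → S.t g = 0 → ∃ n : ℤ, g = f n) := by
  -- basic domain/terminus computations
  have hba : S.d b = S.t a := by rw [hdb, hta]
  have hdba : S.d (S.mul b a) = 0 := by rw [S.d_mul b a hba, hda]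
  have htba : S.t (S.mul b a) = 2 := by rw [S.t_mul b a hba, htb]
  have hcba : S.d c = S.t (S.mul b a) := by rw [hdc, htba]
  have hdcba : S.d (S.mul c (S.mul b a)) = 0 := by rw [S.d_mul _ _ hcba, hdba]
  have htcba : S.t (S.mul c (S.mul b a)) = 1 := by rw [S.t_mul _ _ hcba, htc]
  have hacba : S.d (S.inv a) = S.t (S.mul c (S.mul b a)) := by
    rw [S.d_inv, hta, htcba]
  have hdz0 : S.d (S.mul (S.inv a) (S.mul c (S.mul b a))) = 0 := by
    rw [S.d_mul _ _ hacba, hdcba]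
  have htz0 : S.t (S.mul (S.inv a) (S.mul c (S.mul b a))) = 0 := by
    rw [S.t_mul _ _ hacba, S.t_inv, hda]
  obtain ⟨g0, hg0v⟩ : ∃ g0 : G0 S, g0.1 = S.mul (S.inv a) (S.mul c (S.mul b a)) :=
    ⟨⟨_, hdz0, htz0⟩, rfl⟩
  -- the action of z = a⁻¹ c b a
  have act_z : ∀ μ : Pth exGraph, μ.rng = 0 →
      S.act (S.mul (S.inv a) (S.mul c (S.mul b a))) μ
        = S.act (S.inv a) (S.act c (S.act b (S.act a μ))) := by
    intro μ hμ
    rw [S.act_mul _ _ μ hacba (hμ.trans hdcba.symm),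
      S.act_mul _ _ μ hcba (hμ.trans hdba.symm),
      S.act_mul b a μ hba (hμ.trans hda.symm)]
  have hz1 : ∀ μ : Pth exGraph, μ.rng = 0 →
      S.act (S.mul (S.inv a) (S.mul c (S.mul b a))) ((Pth.ofEdge (E := exGraph) 0).concat μ)
        = (Pth.ofEdge (E := exGraph) 2).concat (S.act a μ) := by
    intro μ hμ
    rw [act_z _ (concat0_rng hμ), ha1 μ hμ, hb2 μ hμ]
    have hra : (S.act a μ).rng = 1 := (S.act_rng a μ (hμ.trans hda.symm)).trans hta
    rw [hc5 _ hra, ← ha3 _ hra]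
    exact act_inv_act S a _ ((concat_rng (hra.trans rfl)).trans
      ((show (Pth.ofEdge (E := exGraph) 2).rng = (0 : Fin 3) from rfl).trans hda.symm))
  have hz3 : ∀ μ : Pth exGraph, μ.rng = 1 →
      S.act (S.mul (S.inv a) (S.mul c (S.mul b a))) ((Pth.ofEdge (E := exGraph) 2).concat μ)
        = (Pth.ofEdge (E := exGraph) 0).concat (S.act (S.inv a) (S.act c (S.act b μ))) := by
    intro μ hμ
    have hc0 : ((Pth.ofEdge (E := exGraph) 2).concat μ).rng = 0 :=
      (concat_rng (hμ.trans rfl)).trans rfl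
    rw [act_z _ hc0, ha3 μ hμ]
    have hrb : (S.act b μ).rng = 2 := (S.act_rng b μ (hμ.trans hdb.symm)).trans htb
    rw [hb6 _ hrb]
    have hrc : (S.act c (S.act b μ)).rng = 1 :=
      (S.act_rng c _ (hrb.trans hdc.symm)).trans htc
    rw [hc4 _ hrc]
    have hrai : (S.act (S.inv a) (S.act c (S.act b μ))).rng = 0 := by
      rw [S.act_rng _ _ (hrc.trans (by rw [S.d_inv, hta])), S.t_inv, hda]
    rw [← ha1 _ hrai]
    exact act_inv_act S a _ ((concat_rng (hrai.trans rfl)).trans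
      ((show (Pth.ofEdge (E := exGraph) 0).rng = (0 : Fin 3) from rfl).trans hda.symm))
  -- the doubling relation for z
  have QD : Q S (g0 * g0) g0 := by
    intro μ hμ
    show S.act (S.mul g0.1 g0.1) ((Pth.ofEdge (E := exGraph) 0).concat μ)
      = (Pth.ofEdge (E := exGraph) 0).concat (S.act g0.1 μ)
    rw [hg0v]
    rw [S.act_mul _ _ _ (hdz0.trans htz0.symm) ((concat0_rng hμ).trans hdz0.symm)]
    rw [hz1 μ hμ]
    have hra : (S.act a μ).rng = 1 := (S.act_rng a μ (hμ.trans hda.symm)).trans hta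
    rw [hz3 _ hra, ← act_z μ hμ]
  -- z swaps the two edges at u
  have hze1 : S.act g0.1 (Pth.ofEdge (E := exGraph) 0) = Pth.ofEdge (E := exGraph) 2 := by
    have hcv0 : (Pth.ofEdge (E := exGraph) 0).concat (Pth.ofVertex 0) = Pth.ofEdge (E := exGraph) 0 :=
      concat_ofVertex _
    have hcv2 : (Pth.ofEdge (E := exGraph) 2).concat (Pth.ofVertex 1) = Pth.ofEdge (E := exGraph) 2 :=
      concat_ofVertex _
    have h := hz1 (Pth.ofVertex 0) rfl
    rw [hcv0] at h
    have hav : S.act a (Pth.ofVertex 0) = Pth.ofVertex 1 := by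
      have h2 := S.act_vertex a
      rwa [hda, hta] at h2
    rw [hav, hcv2] at h
    rw [hg0v]
    exact h
  have heps : eps S g0 = Multiplicative.ofAdd (1 : ZMod 2) :=
    (eps_apply S g0).trans (epsFun_swap S g0 hze1)
  -- key: z generates an infinite cyclic group
  have key : ∀ N : ℕ, ∀ n : ℤ, n.natAbs ≤ N → g0 ^ n = 1 → n = 0 := by
    intro N
    induction N with
    | zero => intro n hle _; omega
    | succ N ih =>
      intro n hle hpow
      have he1 : (1 : Multiplicative (ZMod 2)) = Multiplicative.ofAdd (1 : ZMod 2) ^ n := by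
        have h0 := map_zpow (eps S) g0 n
        rw [hpow, map_one, heps] at h0
        exact h0
      have h2 : (n : ZMod 2) = 0 := by
        have h3 := congrArg Multiplicative.toAdd he1
        rw [toAdd_one, toAdd_zpow, toAdd_ofAdd, zsmul_one] at h3
        exact h3.symm
      have hdvd : (2 : ℤ) ∣ n := by
        have h4 := (ZMod.intCast_zmod_eq_zero_iff_dvd n 2).mp h2
        exact_mod_cast h4
      obtain ⟨m, rfl⟩ := hdvd
      rcases eq_or_ne m 0 with rfl | hm
      · simp
      · have hDm : (g0 * g0) ^ m = 1 := by
          rw [← zpow_two, ← zpow_mul]; exact hpow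
        have hQm := Qpow S (g0 * g0) g0 QD m
        rw [hDm] at hQm
        have hm1 : g0 ^ m = 1 := by
          apply Subtype.ext
          apply S.faithful ((g0 ^ m).1) (S.unit 0) (by rw [(g0 ^ m).2.1, S.d_unit])
          intro μ hμ
          have hμ0 : μ.rng = 0 := hμ.trans (g0 ^ m).2.1
          have h5 := hQm μ hμ0
          have h6 : S.act ((1 : G0 S)).1 ((Pth.ofEdge (E := exGraph) 0).concat μ)
              = (Pth.ofEdge (E := exGraph) 0).concat μ :=
            S.act_unit 0 _ (concat0_rng hμ0)
          rw [h6] at h5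
          have h7 : S.act ((g0 ^ m).1) μ = μ :=
            (ofEdge_concat_inj (E := exGraph) 0
              ((S.act_rng _ _ (hμ0.trans (g0 ^ m).2.1.symm)).trans ((g0 ^ m).2.2.trans rfl))
              (hμ0.trans rfl) h5.symm)
          rw [h7, S.act_unit 0 μ hμ0]
        exact absurd (ih m (by omega) hm1) hm
  have key' : ∀ n : ℤ, g0 ^ n = 1 → n = 0 := fun n h => key n.natAbs n le_rfl h
  refine ⟨fun n => (g0 ^ n).1, ?_, ?_, ?_, ?_, ?_, ?_, ?_⟩
  · show (g0 ^ (1 : ℤ)).1 = _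
    rw [zpow_one]; exact hg0v
  · show (g0 ^ (0 : ℤ)).1 = _
    rw [zpow_zero]; rfl
  · intro m n
    show (g0 ^ (m + n)).1 = S.mul ((g0 ^ m).1) ((g0 ^ n).1)
    rw [zpow_add]; rfl
  · intro n; exact (g0 ^ n).2
  · intro m n h
    have h2 : g0 ^ m = g0 ^ n := Subtype.ext h
    have h3 : g0 ^ (m - n) = 1 := by rw [zpow_sub, h2, mul_inv_cancel]
    have h4 := key' _ h3
    omega
  · intro n hne hcon
    exact hne (key' n (Subtype.ext hcon))
  · intro g hdg htg
    obtain ⟨pv, hpd, hpt, hp0, hp1, hp2⟩ : ∃ pv : Fin 3 → α,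
        (∀ v, S.d (pv v) = 0) ∧ (∀ v, S.t (pv v) = v) ∧
        pv 0 = S.unit 0 ∧ pv 1 = a ∧ pv 2 = S.mul b a := by
      refine ⟨![S.unit 0, a, S.mul b a], ?_, ?_, rfl, rfl, rfl⟩
      · intro v
        fin_cases v
        · exact S.d_unit 0
        · exact hda
        · exact hdba
      · intro v
        fin_cases v
        · exact S.t_unit 0
        · exact hta
        · exact htba
    have hP := hgen (fun x => ∃ n : ℤ,
        S.mul (S.inv (pv (S.t x))) (S.mul x (pv (S.d x))) = (g0 ^ n).1)
      ?_ ?_ ?_ ?_ ?_ ?_ g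
    · obtain ⟨n, hn⟩ := hP
      refine ⟨n, ?_⟩
      rw [hdg, htg, hp0] at hn
      rw [S.toVGroupoid.inv_unit] at hn
      have e1 : S.mul g (S.unit 0) = g := by
        have h := S.mul_unit g
        rwa [hdg] at h
      rw [e1] at hn
      have e2 : S.mul (S.unit 0) g = g := by
        have h := S.unit_mul g
        rwa [htg] at h
      rw [e2] at hn
      exact (hn : g = (g0 ^ n).1)
    · -- P a
      refine ⟨0, ?_⟩
      rw [hda, hta, hp1, hp0]
      have e1 : S.mul a (S.unit 0) = a := by
        have h := S.mul_unit a
        rwa [hda] at h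
      rw [e1, S.inv_mul, hda, zpow_zero]
      rfl
    · -- P b
      refine ⟨0, ?_⟩
      rw [hdb, htb, hp1, hp2]
      rw [S.inv_mul, S.d_mul b a hba, hda, zpow_zero]
      rfl
    · -- P c
      refine ⟨1, ?_⟩
      rw [hdc, htc, hp1, hp2, zpow_one, hg0v]
    · -- P (unit v)
      intro v
      refine ⟨0, ?_⟩
      rw [S.d_unit, S.t_unit]
      have e1 : S.mul (S.unit v) (pv v) = pv v := by
        have h := S.unit_mul (pv v)
        rwa [hpt v] at h
      rw [e1, S.inv_mul, hpd v, zpow_zero]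
      rfl
    · -- P (inv x)
      rintro x ⟨n, hn⟩
      refine ⟨-n, ?_⟩
      rw [S.d_inv, S.t_inv]
      have hfneg : (g0 ^ (-n)).1 = S.inv ((g0 ^ n).1) := by rw [zpow_neg]; rfl
      rw [hfneg, ← hn]
      have c1 : S.d x = S.t (pv (S.d x)) := (hpt _).symm
      have c2 : S.d (S.inv (pv (S.t x))) = S.t (S.mul x (pv (S.d x))) := by
        rw [S.d_inv, hpt, S.t_mul x _ c1]
      rw [S.toVGroupoid.mul_inv_rev c2, S.toVGroupoid.mul_inv_rev c1, S.inv_inv]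
      rw [S.mul_assoc (S.inv (pv (S.d x))) (S.inv x) (pv (S.t x))
        (by rw [S.d_inv, S.t_inv, hpt]) (by rw [S.d_inv, hpt])]
    · -- P (mul x y)
      rintro x y ⟨m, hm⟩ ⟨n, hn⟩ hxy
      refine ⟨m + n, ?_⟩
      rw [S.d_mul x y hxy, S.t_mul x y hxy]
      have hfadd : (g0 ^ (m + n)).1 = S.mul ((g0 ^ m).1) ((g0 ^ n).1) := by
        rw [zpow_add]; rfl
      rw [hfadd, ← hm, ← hn, hxy]
      have cxq : S.d x = S.t (pv (S.t y)) := hxy.trans (hpt _).symm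
      have cy : S.d y = S.t (pv (S.d y)) := (hpt _).symm
      have hBt : S.t (S.mul x (pv (S.t y))) = S.t x := S.t_mul x _ cxq
      have hBd : S.d (S.mul x (pv (S.t y))) = 0 := by rw [S.d_mul x _ cxq, hpd]
      have hCyt : S.t (S.mul y (pv (S.d y))) = S.t y := S.t_mul y _ cy
      have cqC : S.d (S.inv (pv (S.t y))) = S.t (S.mul y (pv (S.d y))) := by
        rw [S.d_inv, hpt, hCyt]
      have hCt : S.t (S.mul (S.inv (pv (S.t y))) (S.mul y (pv (S.d y)))) = 0 := by
        rw [S.t_mul _ _ cqC, S.t_inv, hpd]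
      rw [S.mul_assoc (S.inv (pv (S.t x))) (S.mul x (pv (S.t y)))
        (S.mul (S.inv (pv (S.t y))) (S.mul y (pv (S.d y))))
        (by rw [S.d_inv, hpt, hBt]) (by rw [hBd, hCt])]
      rw [S.mul_assoc x (pv (S.t y)) (S.mul (S.inv (pv (S.t y))) (S.mul y (pv (S.d y))))
        cxq (by rw [hpd, hCt])]
      rw [S.toVGroupoid.mul_inv_cancel_left
        (g := pv (S.t y)) (k := S.mul y (pv (S.d y))) (by rw [hpt, hCyt])]
      rw [S.mul_assoc x y (pv (S.d y)) hxy cy]
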